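/- Let (L, [−,−]) and (L', [−,−]') be Leibniz algebras over a field F, λ, μ : L → L and λ', μ' : L' → L' linear maps, s ∈ L, s' ∈ L', with bi-affine brackets {a,b} = [a,b] + λ(a) + μ(b) + s and {x,y}' = [x,y]' + λ'(x) + μ'(y) + s'. If there exists a bijective affine map φ : L → L' (φ(x) = ψ₀(x) + q' with ψ₀ linear bijective) satisfying φ({a,b}) = {φ(a), φ(b)}' for all a, b ∈ L, then L and L' are isomorphic as Leibniz algebras, i.e. there is a bijective linear map ψ : L → L' with ψ([a,b]) = [ψ(a), ψ(b)]' for all a, b. In particular, Leibniz affgebras whose fibres are non-isomorphic Leibniz algebras are non-isomorphic. -/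
import Mathlib


/-- If two Leibniz affgebras `a(L;lam,mu,s)` and `a(L';lam',mu',s')` are isomorphic
(via a bijective affine map preserving the bi-affine brackets), then their fibre
Leibniz algebras `(L, B)` and `(L', B')` are isomorphic as Leibniz algebras. -/
theorem leibniz_affgebra_iso_implies_fibre_iso
    {F L L' : Type*} [Field F] [AddCommGroup L] [Module F L]
    [AddCommGroup L'] [Module F L']
    (B : L →ₗ[F] L →ₗ[F] L) (B' : L' →ₗ[F] L' →ₗ[F] L')
    (leib : ∀ a b c : L, B (B a b) c = B (B a c) b + B a (B b c))
    (leib' : ∀ a b c : L', B' (B' a b) c = B' (B' a c) b + B' a (B' b c))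
    (lam mu : L →ₗ[F] L) (lam' mu' : L' →ₗ[F] L') (s : L) (s' : L')
    (br : L → L → L) (hbr : ∀ a b, br a b = B a b + lam a + mu b + s)
    (br' : L' → L' → L') (hbr' : ∀ a b, br' a b = B' a b + lam' a + mu' b + s')
    (ψ₀ : L →ₗ[F] L') (q' : L') (hψ₀ : Function.Bijective ψ₀)
    (hmor : ∀ a b : L, ψ₀ (br a b) + q' = br' (ψ₀ a + q') (ψ₀ b + q')) :
    ∃ ψ : L →ₗ[F] L', Function.Bijective ψ ∧
      ∀ a b : L, ψ (B a b) = B' (ψ a) (ψ b) := by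
  refine ⟨ψ₀, hψ₀, fun a b => ?_⟩
  have h1 := hmor a b
  have h2 := hmor a 0
  have h3 := hmor 0 b
  have h4 := hmor (0 : L) 0
  simp only [hbr, hbr', map_add, map_zero, LinearMap.map_zero, LinearMap.zero_apply,
    LinearMap.add_apply, add_zero, zero_add] at h1 h2 h3 h4
  linear_combination (norm := abel) h1 - h2 - h3 + h4
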